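/- For any 0 ≤ b ≤ a ≤ 1 with c = 1 − a ≥ 0, define in ℂ⁸ ⊗ ℂ^N (with orthonormal vectors η₀,…,η₇ in ℂ^N and \bar{k} = |k⟩ ⊗ η_k): x = √(a−b)·(\bar0+\bar1+\bar2+\bar3)/2 + √b·(\bar4+\bar5)/√2 + √c·\bar6 and y = √(a−b)·(\bar0+i\bar1−\bar2−i\bar3)/2 + √b·(\bar4−\bar5)/√2 + √c·\bar7. Let U = (Σ_{k=0}^{3} i^k |k⟩⟨k| + |4⟩⟨4| − |5⟩⟨5| + |6⟩⟨6| + |7⟩⟨7|) ⊗ I. Then x and y are orthogonal unit vectors, U is unitary, ⟨y, U x⟩ = a, and ⟨x, U y⟩ = b. -/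

import Mathlib

open scoped InnerProductSpace

noncomputable section

/-- `\bar k = |k⟩ ⊗ η_k` inside `ℂ⁸ ⊗ ℂ^N ≅ EuclideanSpace ℂ (Fin 8 × Fin N)`. -/
def bar {N : ℕ} (η : Fin 8 → EuclideanSpace ℂ (Fin N)) (k : Fin 8) :
    EuclideanSpace ℂ (Fin 8 × Fin N) :=
  WithLp.toLp 2 (fun p => (if p.1 = k then 1 else 0) * η k p.2)

/-- The state `x` of the tightness construction. -/
def xvec {N : ℕ} (η : Fin 8 → EuclideanSpace ℂ (Fin N)) (a b : ℝ) :
    EuclideanSpace ℂ (Fin 8 × Fin N) :=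
  ((Real.sqrt (a - b) : ℂ) / 2) • (bar η 0 + bar η 1 + bar η 2 + bar η 3)
    + ((Real.sqrt b : ℂ) / (Real.sqrt 2 : ℂ)) • (bar η 4 + bar η 5)
    + (Real.sqrt (1 - a) : ℂ) • bar η 6

/-- The state `y` of the tightness construction. -/
def yvec {N : ℕ} (η : Fin 8 → EuclideanSpace ℂ (Fin N)) (a b : ℝ) :
    EuclideanSpace ℂ (Fin 8 × Fin N) :=
  ((Real.sqrt (a - b) : ℂ) / 2) •
      (bar η 0 + Complex.I • bar η 1 - bar η 2 - Complex.I • bar η 3)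
    + ((Real.sqrt b : ℂ) / (Real.sqrt 2 : ℂ)) • (bar η 4 - bar η 5)
    + (Real.sqrt (1 - a) : ℂ) • bar η 7

/-- The phase `i^k` on `|k⟩` for `k = 0,…,3`, then `1, -1, 1, 1` on `|4⟩,…,|7⟩`. -/
def ph : Fin 8 → ℂ :=
  ![1, Complex.I, -1, -Complex.I, 1, -1, 1, 1]

/-- The unitary `U = (Σ_{k<4} i^k |k⟩⟨k| + |4⟩⟨4| - |5⟩⟨5| + |6⟩⟨6| + |7⟩⟨7|) ⊗ I`. -/
def Ufun {N : ℕ} (v : EuclideanSpace ℂ (Fin 8 × Fin N)) :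
    EuclideanSpace ℂ (Fin 8 × Fin N) :=
  WithLp.toLp 2 (fun p => ph p.1 * v p)

lemma inner_bar {N : ℕ} {η : Fin 8 → EuclideanSpace ℂ (Fin N)} (hη : Orthonormal ℂ η)
    (j k : Fin 8) : ⟪bar η j, bar η k⟫_ℂ = if j = k then 1 else 0 := by
  have h := orthonormal_iff_ite.mp hη j k
  simp only [PiLp.inner_apply, RCLike.inner_apply] at h ⊢
  simp only [bar, PiLp.toLp_apply, Fintype.sum_prod_type, map_mul, apply_ite, map_one, map_zero,
    ite_mul, one_mul, zero_mul, mul_ite, mul_zero, mul_one]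
  by_cases hjk : j = k
  · subst hjk
    simpa [Finset.sum_ite_eq'] using h
  · simp [Finset.sum_ite_eq', hjk, Ne.symm hjk]

lemma ph0 : ph 0 = 1 := rfl
lemma ph1 : ph 1 = Complex.I := rfl
lemma ph2 : ph 2 = -1 := rfl
lemma ph3 : ph 3 = -Complex.I := rfl
lemma ph4 : ph 4 = 1 := rfl
lemma ph5 : ph 5 = -1 := rfl
lemma ph6 : ph 6 = 1 := rfl
lemma ph7 : ph 7 = 1 := rfl

lemma ph_conj (k : Fin 8) : (starRingEnd ℂ) (ph k) * ph k = 1 := by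
  have h : ph k = 1 ∨ ph k = -1 ∨ ph k = Complex.I ∨ ph k = -Complex.I := by
    fin_cases k
    · exact Or.inl rfl
    · exact Or.inr (Or.inr (Or.inl rfl))
    · exact Or.inr (Or.inl rfl)
    · exact Or.inr (Or.inr (Or.inr rfl))
    · exact Or.inl rfl
    · exact Or.inr (Or.inl rfl)
    · exact Or.inl rfl
    · exact Or.inl rfl
  rcases h with h | h | h | h <;> rw [h] <;>
    simp [Complex.conj_I, Complex.I_mul_I]

lemma Ufun_add {N : ℕ} (v w : EuclideanSpace ℂ (Fin 8 × Fin N)) :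
    Ufun (v + w) = Ufun v + Ufun w := by
  ext p; simp [Ufun, mul_add]

lemma Ufun_sub {N : ℕ} (v w : EuclideanSpace ℂ (Fin 8 × Fin N)) :
    Ufun (v - w) = Ufun v - Ufun w := by
  ext p; simp [Ufun, mul_sub]

lemma Ufun_smul {N : ℕ} (c : ℂ) (v : EuclideanSpace ℂ (Fin 8 × Fin N)) :
    Ufun (c • v) = c • Ufun v := by
  ext p; simp [Ufun]; ring

lemma Ufun_bar {N : ℕ} (η : Fin 8 → EuclideanSpace ℂ (Fin N)) (k : Fin 8) :
    Ufun (bar η k) = ph k • bar η k := by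
  ext p
  simp only [Ufun, bar, PiLp.smul_apply, smul_eq_mul, PiLp.toLp_apply]
  by_cases h : p.1 = k
  · simp [h]
  · simp [h]

set_option maxHeartbeats 1000000 in
/-- In the tightness construction with `0 ≤ b ≤ a ≤ 1` and orthonormal
`η₀, …, η₇`, the vectors `x, y` are orthogonal unit vectors, `U` is unitary, and
`⟨y, U x⟩ = a`, `⟨x, U y⟩ = b`. -/
theorem tightness_construction (N : ℕ)
    (η : Fin 8 → EuclideanSpace ℂ (Fin N)) (hη : Orthonormal ℂ η)
    (a b : ℝ) (hb : 0 ≤ b) (hba : b ≤ a) (ha : a ≤ 1) :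
    ‖xvec η a b‖ = 1 ∧ ‖yvec η a b‖ = 1 ∧ ⟪xvec η a b, yvec η a b⟫_ℂ = 0 ∧
      (∀ v w : EuclideanSpace ℂ (Fin 8 × Fin N), ⟪Ufun v, Ufun w⟫_ℂ = ⟪v, w⟫_ℂ) ∧
      Function.Bijective (Ufun (N := N)) ∧
      ⟪yvec η a b, Ufun (xvec η a b)⟫_ℂ = (a : ℂ) ∧
      ⟪xvec η a b, Ufun (yvec η a b)⟫_ℂ = (b : ℂ) := by
  have hab : (Real.sqrt (a - b) : ℂ) * (Real.sqrt (a - b) : ℂ) = (a : ℂ) - b := by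
    rw [← Complex.ofReal_mul, Real.mul_self_sqrt (by linarith)]; push_cast; ring
  have hbb : (Real.sqrt b : ℂ) * (Real.sqrt b : ℂ) = (b : ℂ) := by
    rw [← Complex.ofReal_mul, Real.mul_self_sqrt hb]
  have hcc : (Real.sqrt (1 - a) : ℂ) * (Real.sqrt (1 - a) : ℂ) = 1 - (a : ℂ) := by
    rw [← Complex.ofReal_mul, Real.mul_self_sqrt (by linarith)]; push_cast; ring
  have h2 : (Real.sqrt 2 : ℂ) * (Real.sqrt 2 : ℂ) = 2 := by
    rw [← Complex.ofReal_mul, Real.mul_self_sqrt (by norm_num)]; norm_num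
  have h2ne : (Real.sqrt 2 : ℂ) ≠ 0 := by
    simpa using Real.sqrt_ne_zero'.mpr (by norm_num : (0:ℝ) < 2)
  have key : ∀ j k : Fin 8, ⟪bar η j, bar η k⟫_ℂ = if j = k then 1 else 0 := inner_bar hη
  have hxx : ⟪xvec η a b, xvec η a b⟫_ℂ = 1 := by
    simp only [xvec, inner_add_left, inner_add_right, inner_smul_left, inner_smul_right, key]
    simp only [Fin.reduceEq, reduceIte, if_true, map_div₀, Complex.conj_ofReal, map_ofNat]
    field_simp
    linear_combination (4*(Real.sqrt 2:ℂ)*(Real.sqrt 2:ℂ))*hab +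
      (4*(Real.sqrt 2:ℂ)*(Real.sqrt 2:ℂ))*hcc + 8*hbb + (4*((a:ℂ)-b)+4*(1-(a:ℂ))-4)*h2
  have hyy : ⟪yvec η a b, yvec η a b⟫_ℂ = 1 := by
    simp only [yvec, inner_add_left, inner_add_right, inner_sub_left, inner_sub_right,
      inner_smul_left, inner_smul_right, key]
    simp only [Fin.reduceEq, reduceIte, if_true, map_div₀, Complex.conj_ofReal, map_ofNat,
      Complex.conj_I]
    field_simp
    ring_nf
    rw [Complex.I_sq, sq, sq, sq, sq, hab, hbb, hcc, h2]
    ring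
  have hxy : ⟪xvec η a b, yvec η a b⟫_ℂ = 0 := by
    simp only [xvec, yvec, inner_add_left, inner_add_right, inner_sub_left, inner_sub_right,
      inner_smul_left, inner_smul_right, key]
    simp only [Fin.reduceEq, reduceIte, if_true, map_div₀, Complex.conj_ofReal, map_ofNat,
      Complex.conj_I]
    ring_nf
  have hUx : Ufun (xvec η a b) = ((Real.sqrt (a - b) : ℂ) / 2) •
      (bar η 0 + Complex.I • bar η 1 + (-1 : ℂ) • bar η 2 + (-Complex.I) • bar η 3)
    + ((Real.sqrt b : ℂ) / (Real.sqrt 2 : ℂ)) • (bar η 4 + (-1 : ℂ) • bar η 5)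
    + (Real.sqrt (1 - a) : ℂ) • bar η 6 := by
    simp only [xvec, Ufun_add, Ufun_smul, Ufun_bar, ph0, ph1, ph2, ph3, ph4, ph5, ph6, one_smul]
  have hUy : Ufun (yvec η a b) = ((Real.sqrt (a - b) : ℂ) / 2) •
      (bar η 0 + (Complex.I * Complex.I) • bar η 1 - (-1 : ℂ) • bar η 2
        - (Complex.I * -Complex.I) • bar η 3)
    + ((Real.sqrt b : ℂ) / (Real.sqrt 2 : ℂ)) • (bar η 4 - (-1 : ℂ) • bar η 5)
    + (Real.sqrt (1 - a) : ℂ) • bar η 7 := by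
    simp only [yvec, Ufun_add, Ufun_sub, Ufun_smul, Ufun_bar, ph0, ph1, ph2, ph3, ph4, ph5,
      ph7, one_smul, smul_smul, mul_comm]
  have hyUx : ⟪yvec η a b, Ufun (xvec η a b)⟫_ℂ = (a : ℂ) := by
    rw [hUx]
    simp only [yvec, inner_add_left, inner_add_right, inner_sub_left, inner_sub_right,
      inner_smul_left, inner_smul_right, key]
    simp only [Fin.reduceEq, reduceIte, if_true, map_div₀, Complex.conj_ofReal, map_ofNat,
      Complex.conj_I]
    field_simp
    ring_nf
    linear_combination (-(2*(Real.sqrt (a-b):ℂ)*(Real.sqrt (a-b):ℂ)*(Real.sqrt 2:ℂ)*(Real.sqrt 2:ℂ)))*Complex.I_sq +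
      (4*(Real.sqrt 2:ℂ)*(Real.sqrt 2:ℂ))*hab + 8*hbb - (4*(b:ℂ))*h2
  have hxUy : ⟪xvec η a b, Ufun (yvec η a b)⟫_ℂ = (b : ℂ) := by
    rw [hUy]
    simp only [xvec, inner_add_left, inner_add_right, inner_sub_left, inner_sub_right,
      inner_smul_left, inner_smul_right, key]
    simp only [Fin.reduceEq, reduceIte, if_true, map_div₀, Complex.conj_ofReal, map_ofNat,
      Complex.conj_I]
    field_simp
    ring_nf
    linear_combination (2*(Real.sqrt (a-b):ℂ)*(Real.sqrt (a-b):ℂ)*(Real.sqrt 2:ℂ)*(Real.sqrt 2:ℂ))*Complex.I_sq + 8*hbb - 4*(b:ℂ)*h2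
  have hnx : ‖xvec η a b‖ = 1 := by
    have h := (inner_self_eq_norm_sq_to_K (𝕜 := ℂ) (xvec η a b)).symm.trans hxx
    have h3 : ((‖xvec η a b‖ ^ 2 : ℝ) : ℂ) = ((1 : ℝ) : ℂ) := by push_cast; exact h
    have h2 : (‖xvec η a b‖ : ℝ) ^ 2 = 1 := Complex.ofReal_inj.mp h3
    nlinarith [norm_nonneg (xvec η a b)]
  have hny : ‖yvec η a b‖ = 1 := by
    have h := (inner_self_eq_norm_sq_to_K (𝕜 := ℂ) (yvec η a b)).symm.trans hyy
    have h3 : ((‖yvec η a b‖ ^ 2 : ℝ) : ℂ) = ((1 : ℝ) : ℂ) := by push_cast; exact h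
    have h2 : (‖yvec η a b‖ : ℝ) ^ 2 = 1 := Complex.ofReal_inj.mp h3
    nlinarith [norm_nonneg (yvec η a b)]
  refine ⟨hnx, hny, hxy, ?_, ?_, hyUx, hxUy⟩
  · intro v w
    simp only [PiLp.inner_apply, RCLike.inner_apply, Ufun, PiLp.toLp_apply, map_mul]
    refine Finset.sum_congr rfl fun p _ => ?_
    linear_combination ((starRingEnd ℂ) (v p) * w p) * ph_conj p.1
  · refine Function.bijective_iff_has_inverse.mpr
      ⟨fun v => (WithLp.toLp 2 (fun p => (starRingEnd ℂ) (ph p.1) * v p) : EuclideanSpace ℂ (Fin 8 × Fin N)),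
        fun v => ?_, fun v => ?_⟩ <;> ext p
    · show (starRingEnd ℂ) (ph p.1) * (ph p.1 * v p) = v p
      rw [← mul_assoc, ph_conj, one_mul]
    · show ph p.1 * ((starRingEnd ℂ) (ph p.1) * v p) = v p
      rw [← mul_assoc, mul_comm (ph p.1), ph_conj, one_mul]


end
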